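/- Let Ω = {1,…,n}, G ≤ S_n, and let A : S_n → [0,1] be a probability distribution on S_n (∑_{π∈S_n} A^π = 1, A^π ≥ 0) that is constant on the right cosets of G, i.e. A^{gπ} = A^π for all g ∈ G and π ∈ S_n. Then the game value φ = ∑_{π∈S_n} A^π m_π, the A-weighted average of the marginal operators, is a G-symmetric quasi-value. -/

import Mathlib

open scoped BigOperators

/-- The space of cooperative games on player set `Ω`: real-valued functions on
coalitions vanishing on the empty coalition. -/
def GameSpace (Ω : Type*) [DecidableEq Ω] : Submodule ℝ (Finset Ω → ℝ) where
  carrier := {v | v ∅ = 0}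
  add_mem' := by
    intro a b ha hb
    simp only [Set.mem_setOf_eq, Pi.add_apply] at *
    simp [ha, hb]
  zero_mem' := rfl
  smul_mem' := by
    intro c v hv
    simp only [Set.mem_setOf_eq, Pi.smul_apply] at *
    simp [hv]

/-- A (linear) game value: a linear operator from games to payoff vectors. -/
abbrev GameValue (Ω : Type*) [DecidableEq Ω] := GameSpace Ω →ₗ[ℝ] (Ω → ℝ)

/-- Player `i` is a null player of the game `v`: `v(R ∪ {i}) = v(R)` for all `R`. -/
def IsNullPlayer {Ω : Type*} [DecidableEq Ω] (i : Ω) (v : GameSpace Ω) : Prop :=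
  ∀ R : Finset Ω, (v : Finset Ω → ℝ) (insert i R) = (v : Finset Ω → ℝ) R

/-- A quasi-value: a linear game value satisfying the null-player property and
efficiency. -/
def IsQuasiValue {Ω : Type*} [Fintype Ω] [DecidableEq Ω] (φ : GameValue Ω) : Prop :=
  (∀ (v : GameSpace Ω) (i : Ω), IsNullPlayer i v → φ v i = 0) ∧
  (∀ v : GameSpace Ω, ∑ i, φ v i = (v : Finset Ω → ℝ) Finset.univ)

/-- The action of a permutation on a game: `(g • v)(R) = v(g⁻¹(R))`. -/
def permGame {Ω : Type*} [DecidableEq Ω] (g : Equiv.Perm Ω) (v : GameSpace Ω) :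
    GameSpace Ω :=
  ⟨fun R => (v : Finset Ω → ℝ) (R.image (g⁻¹ : Equiv.Perm Ω)), by
    show (v : Finset Ω → ℝ) ((∅ : Finset Ω).image (g⁻¹ : Equiv.Perm Ω)) = 0
    rw [Finset.image_empty]
    exact v.2⟩

/-- `φ` is symmetric with respect to all permutations in `G`:
`φ(g • v) = g • φ(v)`, i.e. `φ(g • v)ᵢ = φ(v)_{g⁻¹ i}` for all `g ∈ G`. -/
def IsGSym {Ω : Type*} [DecidableEq Ω] (G : Subgroup (Equiv.Perm Ω))
    (φ : GameValue Ω) : Prop :=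
  ∀ g ∈ G, ∀ (v : GameSpace Ω) (i : Ω), φ (permGame g v) i = φ v (g⁻¹ i)

/-- The unanimity game `u_R` for a nonempty coalition `R`. -/
def unanimity {Ω : Type*} [DecidableEq Ω] (R : Finset Ω) (hR : R.Nonempty) :
    GameSpace Ω :=
  ⟨fun S => if R ⊆ S then (1 : ℝ) else 0, by
    show (if R ⊆ (∅ : Finset Ω) then (1 : ℝ) else 0) = 0
    simp [Finset.subset_empty, hR.ne_empty]⟩

/-- The marginal operator `m_π`: the player at arrival position `π⁻¹(j)` receives
her marginal contribution to the coalition of previously arrived players. -/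
def marginalValue {n : ℕ} (π : Equiv.Perm (Fin n)) : GameValue (Fin n) where
  toFun v j :=
    (v : Finset (Fin n) → ℝ) (Finset.univ.filter fun k => π⁻¹ k ≤ π⁻¹ j) -
    (v : Finset (Fin n) → ℝ) (Finset.univ.filter fun k => π⁻¹ k < π⁻¹ j)
  map_add' a b := by
    funext j
    simp only [Submodule.coe_add, Pi.add_apply]
    ring
  map_smul' c a := by
    funext j
    simp only [Submodule.coe_smul, Pi.smul_apply, RingHom.id_apply, smul_eq_mul]
    ring

lemma marg_null {n : ℕ} (π : Equiv.Perm (Fin n)) (v : GameSpace (Fin n)) (i : Fin n)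
    (h : IsNullPlayer i v) : marginalValue π v i = 0 := by
  have hs : (Finset.univ.filter fun k => π⁻¹ k ≤ π⁻¹ i)
      = insert i (Finset.univ.filter fun k => π⁻¹ k < π⁻¹ i) := by
    ext k
    simp only [Finset.mem_filter, Finset.mem_univ, true_and, Finset.mem_insert]
    constructor
    · intro hk
      rcases lt_or_eq_of_le hk with h1 | h1
      · exact Or.inr h1
      · exact Or.inl (π⁻¹.injective h1)
    · rintro (rfl | hk)
      · exact le_refl _
      · exact le_of_lt hk
  show (v : Finset (Fin n) → ℝ) _ - (v : Finset (Fin n) → ℝ) _ = 0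
  rw [hs, h]
  ring

lemma marg_eff {n : ℕ} (π : Equiv.Perm (Fin n)) (v : GameSpace (Fin n)) :
    ∑ i, marginalValue π v i = (v : Finset (Fin n) → ℝ) Finset.univ := by
  set F : ℕ → ℝ := fun m => (v : Finset (Fin n) → ℝ)
    (Finset.univ.filter fun k => ((π⁻¹ k : Fin n) : ℕ) < m) with hF
  have key : ∀ t : Fin n, marginalValue π v (π t) = F (t + 1) - F t := by
    intro t
    show (v : Finset (Fin n) → ℝ) _ - (v : Finset (Fin n) → ℝ) _ = _
    have h1 : (Finset.univ.filter fun k => π⁻¹ k ≤ π⁻¹ (π t))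
        = Finset.univ.filter fun k => ((π⁻¹ k : Fin n) : ℕ) < (t : ℕ) + 1 := by
      apply Finset.filter_congr
      intro k _
      simp only [Equiv.Perm.inv_def, Equiv.symm_apply_apply, Fin.le_def, Nat.lt_succ_iff]
    have h2 : (Finset.univ.filter fun k => π⁻¹ k < π⁻¹ (π t))
        = Finset.univ.filter fun k => ((π⁻¹ k : Fin n) : ℕ) < (t : ℕ) := by
      apply Finset.filter_congr
      intro k _
      simp only [Equiv.Perm.inv_def, Equiv.symm_apply_apply, Fin.lt_def]
    rw [h1, h2]
  calc ∑ i, marginalValue π v i = ∑ t, marginalValue π v (π t) :=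
        (Equiv.sum_comp π _).symm
    _ = ∑ t : Fin n, (F (t + 1) - F t) := by
        exact Finset.sum_congr rfl fun t _ => key t
    _ = ∑ t ∈ Finset.range n, (F (t + 1) - F t) :=
        Fin.sum_univ_eq_sum_range (fun m => F (m + 1) - F m) n
    _ = F n - F 0 := Finset.sum_range_sub F n
    _ = (v : Finset (Fin n) → ℝ) Finset.univ := by
        have hFn : F n = (v : Finset (Fin n) → ℝ) Finset.univ := by
          simp [hF, Finset.filter_true_of_mem, Fin.is_lt]
        have hF0 : F 0 = 0 := by
          simp only [hF, Nat.not_lt_zero, Finset.filter_false]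
          exact v.2
        rw [hFn, hF0]; ring

lemma marg_perm {n : ℕ} (π g : Equiv.Perm (Fin n)) (v : GameSpace (Fin n)) (i : Fin n) :
    marginalValue π (permGame g v) i = marginalValue (g⁻¹ * π) v (g⁻¹ i) := by
  have him : ∀ (p : Fin n → Prop) [DecidablePred p],
      (Finset.univ.filter p).image (g⁻¹ : Equiv.Perm (Fin n))
        = Finset.univ.filter fun m => p (g m) := by
    intro p _
    ext m
    simp only [Finset.mem_image, Finset.mem_filter, Finset.mem_univ, true_and]
    constructor
    · rintro ⟨k, hk, rfl⟩; simpa using hk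
    · intro hm; exact ⟨g m, hm, by simp⟩
  show (v : Finset (Fin n) → ℝ) _ - (v : Finset (Fin n) → ℝ) _ = _
  rw [him, him]
  have e1 : (Finset.univ.filter fun m => π⁻¹ (g m) ≤ π⁻¹ i)
      = Finset.univ.filter fun k => (g⁻¹ * π)⁻¹ k ≤ (g⁻¹ * π)⁻¹ (g⁻¹ i) := by
    apply Finset.filter_congr; intro k _
    simp [Equiv.Perm.mul_apply]
  have e2 : (Finset.univ.filter fun m => π⁻¹ (g m) < π⁻¹ i)
      = Finset.univ.filter fun k => (g⁻¹ * π)⁻¹ k < (g⁻¹ * π)⁻¹ (g⁻¹ i) := by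
    apply Finset.filter_congr; intro k _
    simp [Equiv.Perm.mul_apply]
  rw [e1, e2]
  rfl

/-- if `A` is a probability distribution on `Sₙ` constant on the
right cosets of `G` (i.e. `A^{gπ} = A^π` for `g ∈ G`), then the `A`-weighted
average of the marginal operators is a `G`-symmetric quasi-value. -/
theorem stmt15 {n : ℕ} (G : Subgroup (Equiv.Perm (Fin n)))
    (A : Equiv.Perm (Fin n) → ℝ) (hA0 : ∀ π, 0 ≤ A π)
    (hA1 : ∑ π : Equiv.Perm (Fin n), A π = 1)
    (hAG : ∀ g ∈ G, ∀ π : Equiv.Perm (Fin n), A (g * π) = A π) :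
    IsQuasiValue (∑ π : Equiv.Perm (Fin n), A π • marginalValue π) ∧
    IsGSym G (∑ π : Equiv.Perm (Fin n), A π • marginalValue π) := by
  have main : (∀ (v : GameSpace (Fin n)) (i : Fin n), IsNullPlayer i v →
      (∑ π : Equiv.Perm (Fin n), A π • marginalValue π) v i = 0)
    ∧ (∀ v : GameSpace (Fin n),
        ∑ i, (∑ π : Equiv.Perm (Fin n), A π • marginalValue π) v i
          = (v : Finset (Fin n) → ℝ) Finset.univ)
    ∧ (∀ g ∈ G, ∀ (v : GameSpace (Fin n)) (i : Fin n),
        (∑ π : Equiv.Perm (Fin n), A π • marginalValue π) (permGame g v) i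
          = (∑ π : Equiv.Perm (Fin n), A π • marginalValue π) v (g⁻¹ i)) := by
    have hφ : ∀ (v : GameSpace (Fin n)) (i : Fin n),
        (∑ π : Equiv.Perm (Fin n), A π • marginalValue π) v i
          = ∑ π : Equiv.Perm (Fin n), A π * marginalValue π v i := by
      intro v i
      rw [LinearMap.sum_apply]
      simp [Finset.sum_apply]
    refine ⟨?_, ?_, ?_⟩
    · intro v i h
      rw [hφ]
      refine Finset.sum_eq_zero fun π _ => ?_
      rw [marg_null π v i h]; ring
    · intro v
      calc ∑ i, (∑ π : Equiv.Perm (Fin n), A π • marginalValue π) v i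
          = ∑ i, ∑ π : Equiv.Perm (Fin n), A π * marginalValue π v i := by
            exact Finset.sum_congr rfl fun i _ => hφ v i
        _ = ∑ π : Equiv.Perm (Fin n), ∑ i, A π * marginalValue π v i :=
            Finset.sum_comm
        _ = ∑ π : Equiv.Perm (Fin n), A π * (v : Finset (Fin n) → ℝ) Finset.univ := by
            refine Finset.sum_congr rfl fun π _ => ?_
            rw [← Finset.mul_sum, marg_eff]
        _ = (v : Finset (Fin n) → ℝ) Finset.univ := by
            rw [← Finset.sum_mul, hA1, one_mul]
    · intro g hg v i
      rw [hφ, hφ]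
      calc ∑ π : Equiv.Perm (Fin n), A π * marginalValue π (permGame g v) i
          = ∑ π : Equiv.Perm (Fin n), A π * marginalValue (g⁻¹ * π) v (g⁻¹ i) := by
            exact Finset.sum_congr rfl fun π _ => by rw [marg_perm]
        _ = ∑ σ : Equiv.Perm (Fin n), A (g * σ) * marginalValue σ v (g⁻¹ i) := by
            refine (Fintype.sum_equiv (Equiv.mulLeft g) _ _ fun σ => ?_).symm
            simp [Equiv.mulLeft]
        _ = ∑ σ : Equiv.Perm (Fin n), A σ * marginalValue σ v (g⁻¹ i) := by
            exact Finset.sum_congr rfl fun σ _ => by rw [hAG g hg]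
  exact ⟨⟨main.1, main.2.1⟩, main.2.2⟩
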